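/- Let f : (0,1) → ℝ be concave with 0 ≤ f(π) ≤ min(π, 1-π) for all π ∈ (0,1). Then |f(π₁) - f(π₂)| ≤ |π₁ - π₂| for all π₁, π₂ ∈ (0,1), and f extends continuously to [0,1] with f(0) = f(1) = 0. -/

import Mathlib

open Set

lemma aux_slope (f : ℝ → ℝ) (hconc : ConcaveOn ℝ (Set.Ioo 0 1) f)
    (hb : ∀ p ∈ Set.Ioo (0:ℝ) 1, 0 ≤ f p ∧ f p ≤ p)
    {p1 p2 : ℝ} (h1 : p1 ∈ Set.Ioo (0:ℝ) 1) (h2 : p2 ∈ Set.Ioo (0:ℝ) 1)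
    (hlt : p1 < p2) : f p2 - f p1 ≤ p2 - p1 := by
  obtain ⟨hp1, hp1'⟩ := h1
  obtain ⟨hp2, hp2'⟩ := h2
  have key : ∀ ε ∈ Set.Ioo (0:ℝ) p1, f p2 - f p1 ≤ (p2 - p1) * f p2 / (p2 - ε) := by
    rintro ε ⟨hε, hε'⟩
    have hεI : ε ∈ Set.Ioo (0:ℝ) 1 := ⟨hε, hε'.trans hp1'⟩
    have hden : (0:ℝ) < p2 - ε := by linarith
    obtain ⟨a, b, ha_def, hb_def⟩ :
        ∃ a b : ℝ, a = (p2 - p1) / (p2 - ε) ∧ b = (p1 - ε) / (p2 - ε) := ⟨_, _, rfl, rfl⟩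
    have ha : 0 ≤ a := by rw [ha_def]; apply div_nonneg <;> linarith
    have hbpos : 0 ≤ b := by rw [hb_def]; apply div_nonneg <;> linarith
    have hab : a + b = 1 := by rw [ha_def, hb_def]; field_simp; ring
    have hcomb : a • ε + b • p2 = p1 := by
      rw [smul_eq_mul, smul_eq_mul, ha_def, hb_def]
      field_simp
      ring
    have hcc := hconc.2 hεI ⟨hp2, hp2'⟩ ha hbpos hab
    rw [hcomb, smul_eq_mul, smul_eq_mul] at hcc
    have hfε := (hb ε hεI).1
    have hfp2 : 0 ≤ f p2 := (hb p2 ⟨hp2, hp2'⟩).1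
    have h1 : b * f p2 ≤ f p1 := by nlinarith [mul_nonneg ha hfε]
    have hsum : a * f p2 + b * f p2 = f p2 := by rw [← add_mul, hab, one_mul]
    have h2 : f p2 - f p1 ≤ a * f p2 := by linarith
    calc f p2 - f p1 ≤ a * f p2 := h2
      _ = (p2 - p1) * f p2 / (p2 - ε) := by rw [ha_def]; ring
  have hne : p2 - (0:ℝ) ≠ 0 := by simp; linarith
  have hcont : ContinuousAt (fun ε : ℝ => (p2 - p1) * f p2 / (p2 - ε)) 0 :=
    ContinuousAt.div continuousAt_const (by fun_prop) hne
  have htend : Filter.Tendsto (fun ε => (p2 - p1) * f p2 / (p2 - ε))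
      (nhdsWithin 0 (Set.Ioi 0)) (nhds ((p2 - p1) * f p2 / (p2 - 0))) :=
    hcont.continuousWithinAt.tendsto
  have hle : f p2 - f p1 ≤ (p2 - p1) * f p2 / (p2 - 0) := by
    refine ge_of_tendsto htend ?_
    filter_upwards [Ioo_mem_nhdsGT_of_mem ⟨le_refl 0, hp1⟩] with ε hε
    exact key ε hε
  have hfp2' : f p2 ≤ p2 := (hb p2 ⟨hp2, hp2'⟩).2
  have hfp2 : 0 ≤ f p2 := (hb p2 ⟨hp2, hp2'⟩).1
  rw [sub_zero, le_div_iff₀ hp2] at hle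
  nlinarith [mul_le_mul_of_nonneg_left hfp2' (by linarith : (0:ℝ) ≤ p2 - p1)]

theorem stmt_16 (f : ℝ → ℝ)
    (hconc : ConcaveOn ℝ (Set.Ioo 0 1) f)
    (hbound : ∀ p ∈ Set.Ioo (0:ℝ) 1, 0 ≤ f p ∧ f p ≤ min p (1 - p)) :
    (∀ p₁ ∈ Set.Ioo (0:ℝ) 1, ∀ p₂ ∈ Set.Ioo (0:ℝ) 1, |f p₁ - f p₂| ≤ |p₁ - p₂|) ∧
    ∃ g : ℝ → ℝ, ContinuousOn g (Set.Icc 0 1) ∧ Set.EqOn g f (Set.Ioo 0 1) ∧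
      g 0 = 0 ∧ g 1 = 0 := by
  -- reflected function
  set F : ℝ → ℝ := fun x => f (1 - x) with hF
  have hmem : ∀ x : ℝ, x ∈ Set.Ioo (0:ℝ) 1 → (1 - x) ∈ Set.Ioo (0:ℝ) 1 := by
    rintro x ⟨hx, hx'⟩; exact ⟨by linarith, by linarith⟩
  have hFconc : ConcaveOn ℝ (Set.Ioo 0 1) F := by
    refine ⟨(convex_Ioo 0 1), ?_⟩
    intro x hx y hy a b ha hb hab
    have h1 : F (a • x + b • y) = f (a • (1 - x) + b • (1 - y)) := by
      simp only [hF, smul_eq_mul]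
      ring_nf
      congr 1
      nlinarith [hab]
    rw [h1]
    exact hconc.2 (hmem x hx) (hmem y hy) ha hb hab
  have hb1 : ∀ p ∈ Set.Ioo (0:ℝ) 1, 0 ≤ f p ∧ f p ≤ p := by
    intro p hp
    exact ⟨(hbound p hp).1, (hbound p hp).2.trans (min_le_left _ _)⟩
  have hbF : ∀ p ∈ Set.Ioo (0:ℝ) 1, 0 ≤ F p ∧ F p ≤ p := by
    intro p hp
    refine ⟨(hbound _ (hmem p hp)).1, ?_⟩
    have := (hbound _ (hmem p hp)).2.trans (min_le_right _ _)
    simpa using this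
  have hlip : ∀ p₁ ∈ Set.Ioo (0:ℝ) 1, ∀ p₂ ∈ Set.Ioo (0:ℝ) 1,
      |f p₁ - f p₂| ≤ |p₁ - p₂| := by
    have main : ∀ p₁ ∈ Set.Ioo (0:ℝ) 1, ∀ p₂ ∈ Set.Ioo (0:ℝ) 1, p₁ < p₂ →
        |f p₁ - f p₂| ≤ |p₁ - p₂| := by
      intro p₁ h₁ p₂ h₂ hlt
      have hA : f p₂ - f p₁ ≤ p₂ - p₁ := aux_slope f hconc hb1 h₁ h₂ hlt
      have hB : f p₁ - f p₂ ≤ p₂ - p₁ := by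
        have := aux_slope F hFconc hbF (hmem p₂ h₂) (hmem p₁ h₁) (by linarith)
        simp only [hF] at this
        have e1 : (1 : ℝ) - (1 - p₁) = p₁ := by ring
        have e2 : (1 : ℝ) - (1 - p₂) = p₂ := by ring
        rw [e1, e2] at this
        linarith
      rw [abs_sub_le_iff]
      constructor <;> rw [abs_of_nonpos (by linarith)] <;> linarith
    intro p₁ h₁ p₂ h₂
    rcases lt_trichotomy p₁ p₂ with h | h | h
    · exact main p₁ h₁ p₂ h₂ h
    · simp [h]
    · rw [abs_sub_comm, abs_sub_comm p₁ p₂]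
      exact main p₂ h₂ p₁ h₁ h
  refine ⟨hlip, ?_⟩
  set g : ℝ → ℝ := fun x => if x ∈ Set.Ioo (0:ℝ) 1 then f x else 0 with hg
  have hg0 : g 0 = 0 := by simp [hg]
  have hg1 : g 1 = 0 := by simp [hg]
  have hgeq : Set.EqOn g f (Set.Ioo 0 1) := by
    intro x hx; simp only [hg]; rw [if_pos hx]
  have hglip : ∀ x ∈ Set.Icc (0:ℝ) 1, ∀ y ∈ Set.Icc (0:ℝ) 1, |g x - g y| ≤ |x - y| := by
    have bd : ∀ x ∈ Set.Ioo (0:ℝ) 1, ∀ c : ℝ, c = 0 ∨ c = 1 → |f x - 0| ≤ |x - c| := by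
      rintro x hx c (rfl | rfl)
      · rw [sub_zero, sub_zero, abs_of_nonneg (hb1 x hx).1,
          abs_of_nonneg (le_of_lt hx.1)]
        exact (hb1 x hx).2
      · rw [sub_zero, abs_of_nonneg (hb1 x hx).1, abs_of_nonpos (by linarith [hx.2])]
        have := (hbound x hx).2.trans (min_le_right _ _)
        linarith
    intro x hx y hy
    by_cases hxI : x ∈ Set.Ioo (0:ℝ) 1 <;> by_cases hyI : y ∈ Set.Ioo (0:ℝ) 1
    · rw [hgeq hxI, hgeq hyI]; exact hlip x hxI y hyI
    · have hy01 : y = 0 ∨ y = 1 := by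
        rcases hx with ⟨_, _⟩; rcases hy with ⟨hy1, hy2⟩
        rcases eq_or_lt_of_le hy1 with h | h
        · exact Or.inl h.symm
        · right; by_contra hne; exact hyI ⟨h, lt_of_le_of_ne hy2 hne⟩
      rw [hgeq hxI]; simp only [hg]; rw [if_neg hyI]
      exact bd x hxI y hy01
    · have hx01 : x = 0 ∨ x = 1 := by
        rcases hy with ⟨_, _⟩; rcases hx with ⟨hx1, hx2⟩
        rcases eq_or_lt_of_le hx1 with h | h
        · exact Or.inl h.symm
        · right; by_contra hne; exact hxI ⟨h, lt_of_le_of_ne hx2 hne⟩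
      rw [abs_sub_comm, abs_sub_comm x y, hgeq hyI]; simp only [hg]; rw [if_neg hxI]
      exact bd y hyI x hx01
    · simp only [hg]; rw [if_neg hxI, if_neg hyI]
      simp [abs_nonneg]
  have hcont : ContinuousOn g (Set.Icc 0 1) := by
    have : LipschitzOnWith 1 g (Set.Icc 0 1) := by
      rw [lipschitzOnWith_iff_dist_le_mul]
      intro x hx y hy
      simpa [Real.dist_eq] using hglip x hx y hy
    exact this.continuousOn
  exact ⟨g, hcont, hgeq, hg0, hg1⟩
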